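/- Joins below meets: let B be a commutative bimonoid, let (aᵢ, bᵢ) for i ∈ I and (cⱼ, dⱼ) for j ∈ J be families in B such that each bᵢ has complement b̄ᵢ and each cⱼ has complement c̄ⱼ. If the join s = ⋁_{i∈I} (aᵢ·b̄ᵢ) and the meet t = ⋀_{j∈J} (c̄ⱼ + dⱼ) exist in B, then s ≤ t if and only if cⱼ·aᵢ ≤ dⱼ + bᵢ for all i ∈ I and j ∈ J. -/
import Mathlib


/-- A commutative bimonoid: a partially ordered set with two commutative
monoid operations, a multiplication `mul` with unit `one` and an addition
`add` with unit `zero`, both monotone in each argument, satisfying the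
hemidistributive law `x·(y+z) ≤ (x·y)+z`. -/
structure CommBimonoidOn (A : Type*) [PartialOrder A] where
  mul : A → A → A
  add : A → A → A
  one : A
  zero : A
  mul_assoc : ∀ x y z, mul (mul x y) z = mul x (mul y z)
  mul_comm : ∀ x y, mul x y = mul y x
  mul_one : ∀ x, mul x one = x
  add_assoc : ∀ x y z, add (add x y) z = add x (add y z)
  add_comm : ∀ x y, add x y = add y x
  add_zero : ∀ x, add x zero = x
  mul_mono : ∀ {x y : A} (z), x ≤ y → mul x z ≤ mul y z
  add_mono : ∀ {x y : A} (z), x ≤ y → add x z ≤ add y z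
  hemi : ∀ x y z, mul x (add y z) ≤ add (mul x y) z

/-- `c` is a complement of `a` in the commutative bimonoid `S`. -/
def CommBimonoidOn.IsCompl {A : Type*} [PartialOrder A]
    (S : CommBimonoidOn A) (a c : A) : Prop :=
  S.mul a c ≤ S.zero ∧ S.one ≤ S.add a c

lemma key {A : Type*} [PartialOrder A] (S : CommBimonoidOn A)
    (a b c d bb cb : A) (hb : S.IsCompl b bb) (hc : S.IsCompl c cb) :
    S.mul a bb ≤ S.add cb d ↔ S.mul c a ≤ S.add d b := by
  obtain ⟨hb1, hb2⟩ := hb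
  obtain ⟨hc1, hc2⟩ := hc
  constructor
  · intro h
    have h1 : S.mul c a ≤ S.mul c (S.mul a (S.add bb b)) := by
      have h0 : S.mul a S.one ≤ S.mul a (S.add bb b) := by
        rw [S.mul_comm a S.one, S.mul_comm a (S.add bb b)]
        refine S.mul_mono a ?_
        rw [S.add_comm bb b]; rw [S.add_comm b bb] at hb2
        rw [S.add_comm b bb]; exact hb2
      rw [S.mul_one] at h0
      calc S.mul c a = S.mul a c := S.mul_comm ..
        _ ≤ S.mul (S.mul a (S.add bb b)) c := S.mul_mono c h0
        _ = S.mul c (S.mul a (S.add bb b)) := S.mul_comm ..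
    have h2 : S.mul c (S.mul a (S.add bb b)) ≤ S.mul c (S.add (S.mul a bb) b) := by
      rw [S.mul_comm c, S.mul_comm c]
      exact S.mul_mono c (S.hemi a bb b)
    have h3 : S.mul c (S.add (S.mul a bb) b) ≤ S.add (S.mul c (S.mul a bb)) b :=
      S.hemi ..
    have h4 : S.add (S.mul c (S.mul a bb)) b ≤ S.add (S.mul c (S.add cb d)) b :=
      S.add_mono b (by rw [S.mul_comm c, S.mul_comm c]; exact S.mul_mono c h)
    have h5 : S.mul c (S.add cb d) ≤ S.add (S.mul c cb) d := S.hemi ..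
    have h6 : S.add (S.mul c cb) d ≤ S.add S.zero d := S.add_mono d hc1
    have h7 : S.add S.zero d = d := by rw [S.add_comm, S.add_zero]
    calc S.mul c a ≤ S.add (S.mul c (S.add cb d)) b :=
          le_trans h1 (le_trans h2 (le_trans h3 h4))
      _ ≤ S.add d b := S.add_mono b (le_trans h5 (le_of_le_of_eq h6 h7))
  · intro h
    have h1 : S.mul a bb ≤ S.mul (S.mul a bb) (S.add c cb) := by
      have h0 := S.mul_mono (S.mul a bb) hc2
      rw [S.mul_comm S.one, S.mul_one] at h0
      rw [S.mul_comm (S.mul a bb)]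
      exact h0
    have h2 : S.mul (S.mul a bb) (S.add c cb) ≤ S.add (S.mul (S.mul a bb) c) cb :=
      S.hemi ..
    have h3 : S.mul (S.mul a bb) c = S.mul (S.mul c a) bb := by
      rw [S.mul_comm (S.mul a bb) c, ← S.mul_assoc]
    have h4 : S.mul (S.mul c a) bb ≤ S.mul (S.add d b) bb := S.mul_mono bb h
    have h5 : S.mul (S.add d b) bb = S.mul bb (S.add b d) := by
      rw [S.mul_comm, S.add_comm d b]
    have h6 : S.mul bb (S.add b d) ≤ S.add (S.mul bb b) d := S.hemi ..
    have h7 : S.add (S.mul bb b) d ≤ d := by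
      have : S.mul bb b ≤ S.zero := by rw [S.mul_comm]; exact hb1
      calc S.add (S.mul bb b) d ≤ S.add S.zero d := S.add_mono d this
        _ = d := by rw [S.add_comm, S.add_zero]
    have h8 : S.mul (S.mul a bb) c ≤ d :=
      h3 ▸ le_trans h4 (le_of_eq h5 |>.trans (le_trans h6 h7))
    calc S.mul a bb ≤ S.add (S.mul (S.mul a bb) c) cb := le_trans h1 h2
      _ ≤ S.add d cb := S.add_mono cb h8
      _ = S.add cb d := S.add_comm ..

/-- Joins below meets: if `s = ⋁ᵢ aᵢ·b̄ᵢ` and `t = ⋀ⱼ c̄ⱼ + dⱼ` exist in a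
commutative bimonoid (where `b̄ᵢ`, `c̄ⱼ` are complements of `bᵢ`, `cⱼ`), then
`s ≤ t` iff `cⱼ·aᵢ ≤ dⱼ + bᵢ` for all `i`, `j`. -/
theorem joins_below_meets {B : Type*} [PartialOrder B] (S : CommBimonoidOn B)
    {I J : Type*} (a b : I → B) (c d : J → B) (bc : I → B) (cc : J → B)
    (hbc : ∀ i, S.IsCompl (b i) (bc i))
    (hcc : ∀ j, S.IsCompl (c j) (cc j))
    (s t : B)
    (hs : IsLUB (Set.range fun i => S.mul (a i) (bc i)) s)
    (ht : IsGLB (Set.range fun j => S.add (cc j) (d j)) t) :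
    s ≤ t ↔ ∀ i j, S.mul (c j) (a i) ≤ S.add (d j) (b i) := by
  constructor
  · intro hst i j
    have h1 : S.mul (a i) (bc i) ≤ s := hs.1 ⟨i, rfl⟩
    have h2 : t ≤ S.add (cc j) (d j) := ht.1 ⟨j, rfl⟩
    exact (key S (a i) (b i) (c j) (d j) (bc i) (cc j) (hbc i) (hcc j)).mp
      (le_trans h1 (le_trans hst h2))
  · intro h
    refine hs.2 ?_
    rintro x ⟨i, rfl⟩
    refine ht.2 ?_
    rintro y ⟨j, rfl⟩
    exact (key S (a i) (b i) (c j) (d j) (bc i) (cc j) (hbc i) (hcc j)).mpr (h i j)
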